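/- For any C_1, C_2 > 1, at λ = 1/2 we have p_2'(1/2)/p_1'(1/2) = −1; that is, the marginal rate of substitution between the two agents' equilibrium success probabilities equals −1 at the equal split, independent of the cost parameters. -/

import Mathlib

theorem stmt9 (C1 C2 : ℝ) (hC1 : 1 < C1) (hC2 : 1 < C2) :
    deriv (fun l => (C1 - l) / (C1 * C2 - l * (1 - l))) (1 / 2) /
      deriv (fun l => (C2 - (1 - l)) / (C1 * C2 - l * (1 - l))) (1 / 2) = -1 := by
  have hD : C1 * C2 - (1/2 : ℝ) * (1 - 1/2) ≠ 0 := by nlinarith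
  have hg : HasDerivAt (fun l : ℝ => C1 * C2 - l * (1 - l)) 0 (1/2) := by
    have h1 : HasDerivAt (fun l : ℝ => l * (1 - l))
        (1 * (1 - 1/2) + (1/2) * (0 - 1)) (1/2) :=
      (hasDerivAt_id' (1/2 : ℝ)).fun_mul ((hasDerivAt_const _ (1:ℝ)).fun_sub (hasDerivAt_id' _))
    have h2 := (hasDerivAt_const (1/2 : ℝ) (C1 * C2)).fun_sub h1
    rw [show (0:ℝ) = 0 - (1 * (1 - 1/2) + (1/2) * (0 - 1)) by ring]
    exact h2
  have hf1 : HasDerivAt (fun l : ℝ => C1 - l) (-1) (1/2) := by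
    have := (hasDerivAt_const (1/2 : ℝ) C1).fun_sub (hasDerivAt_id' (1/2 : ℝ))
    simpa using this
  have hf2 : HasDerivAt (fun l : ℝ => C2 - (1 - l)) 1 (1/2) := by
    have := (hasDerivAt_const (1/2 : ℝ) C2).fun_sub
      ((hasDerivAt_const (1/2 : ℝ) (1:ℝ)).fun_sub (hasDerivAt_id' (1/2 : ℝ)))
    simpa using this
  have hq1 := (hf1.fun_div hg hD).deriv
  have hq2 := (hf2.fun_div hg hD).deriv
  rw [hq1, hq2]
  simp only [mul_zero, sub_zero, one_mul, neg_one_mul]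
  rw [div_div_div_cancel_right₀ (pow_ne_zero 2 hD), neg_div, div_self hD]
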